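/- arXiv:2209.08436 — 5 statements merged into one kernel-verified Lean document; each statement's English description precedes it below -/
import Mathlib

section
/- Let f₁ : ℝⁿ → ℝ be λ-strongly convex and differentiable with minimizer z₁*, and let f₂ : ℝⁿ → ℝ satisfy |f₁(z) − f₂(z)| ≤ Δ for all z, with minimizer z₂*. Then ‖z₁* − z₂*‖² ≤ 4Δ/λ. -/
open RealInnerProductSpace

theorem stmt_2 {n : ℕ}
    (f₁ f₂ : EuclideanSpace ℝ (Fin n) → ℝ)
    (lam : ℝ) (hlam : 0 < lam)
    (hdiff : Differentiable ℝ f₁)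
    (hsc : ∀ z z' : EuclideanSpace ℝ (Fin n),
      f₁ z' ≥ f₁ z + ⟪gradient f₁ z, z' - z⟫ + lam / 2 * ‖z' - z‖ ^ 2)
    (Δ : ℝ) (hΔ : 0 ≤ Δ)
    (hclose : ∀ z, |f₁ z - f₂ z| ≤ Δ)
    (z₁ z₂ : EuclideanSpace ℝ (Fin n))
    (hz₁ : ∀ z, f₁ z₁ ≤ f₁ z) (hz₂ : ∀ z, f₂ z₂ ≤ f₂ z) :
    ‖z₁ - z₂‖ ^ 2 ≤ 4 * Δ / lam := by
  have hmin : IsLocalMin f₁ z₁ := Filter.Eventually.of_forall hz₁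
  have hgrad : gradient f₁ z₁ = 0 := by
    unfold gradient
    rw [hmin.fderiv_eq_zero]
    simp
  have h1 := hsc z₁ z₂
  rw [hgrad] at h1
  simp only [inner_zero_left, add_zero] at h1
  -- h1 : f₁ z₂ ≥ f₁ z₁ + 0 + lam/2 * ‖z₂ - z₁‖^2
  have h2 := abs_le.mp (hclose z₂)
  have h3 := abs_le.mp (hclose z₁)
  have h4 := hz₂ z₁
  have hnorm : ‖z₂ - z₁‖ = ‖z₁ - z₂‖ := norm_sub_rev _ _
  rw [hnorm] at h1
  have key : lam / 2 * ‖z₁ - z₂‖ ^ 2 ≤ 2 * Δ := by linarith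
  rw [div_mul_eq_mul_div, le_div_iff₀ hlam] at *
  nlinarith
end

section
/- There exist distributions p, q on {0,1}² × {0,1} that are under 1-sparse joint shift but satisfy neither label shift nor covariate shift. Concretely: under p, Y ~ Bern(0.5), and given Y=0, (X₁,X₂) ~ Bern(0.7) ⊗ Bern(0.6), given Y=1, (X₁,X₂) ~ Bern(0.1) ⊗ Bern(0.2); under q, Y ~ Bern(0.6), and given Y=0, (X₁,X₂) ~ Bern(0.5) ⊗ Bern(0.6), given Y=1, (X₁,X₂) ~ Bern(0.5) ⊗ Bern(0.2). Then (p,q) is under 1-SJS with I = {1}, but q(x₁=1|y=1) ≠ p(x₁=1|y=1) (so not label shift) and q(y=1|x₁=1,x₂=1) ≠ p(y=1|x₁=1,x₂=1) (so not covariate shift). -/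
/-- `bern a b` is the probability that a Bernoulli(a) variable takes value `b`. -/
noncomputable def bern (a : ℝ) (b : Bool) : ℝ := if b then a else 1 - a

/-- Source distribution `p` on (x₁, x₂, y). -/
noncomputable def pdist (x₁ x₂ y : Bool) : ℝ :=
  bern 0.5 y * (if y then bern 0.1 x₁ * bern 0.2 x₂ else bern 0.7 x₁ * bern 0.6 x₂)

/-- Target distribution `q` on (x₁, x₂, y). -/
noncomputable def qdist (x₁ x₂ y : Bool) : ℝ :=
  bern 0.6 y * (if y then bern 0.5 x₁ * bern 0.2 x₂ else bern 0.5 x₁ * bern 0.6 x₂)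

theorem stmt_7 :
    -- (p, q) is under 1-SJS with I = {1}: q(x₂ | x₁, y) = p(x₂ | x₁, y)
    (∀ x₁ x₂ y : Bool,
      qdist x₁ x₂ y / (∑ x₂' : Bool, qdist x₁ x₂' y)
        = pdist x₁ x₂ y / (∑ x₂' : Bool, pdist x₁ x₂' y)) ∧
    -- not label shift: q(x₁ = 1 | y = 1) ≠ p(x₁ = 1 | y = 1)
    ((∑ x₂ : Bool, qdist true x₂ true) / (∑ x₁ : Bool, ∑ x₂ : Bool, qdist x₁ x₂ true)
      ≠ (∑ x₂ : Bool, pdist true x₂ true) / (∑ x₁ : Bool, ∑ x₂ : Bool, pdist x₁ x₂ true)) ∧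
    -- not covariate shift: q(y = 1 | x₁ = 1, x₂ = 1) ≠ p(y = 1 | x₁ = 1, x₂ = 1)
    (qdist true true true / (∑ y : Bool, qdist true true y)
      ≠ pdist true true true / (∑ y : Bool, pdist true true y)) := by
  refine ⟨fun x₁ x₂ y => ?_, ?_, ?_⟩
  · cases x₁ <;> cases x₂ <;> cases y <;>
      norm_num [pdist, qdist, bern, Fintype.sum_bool]
  · norm_num [pdist, qdist, bern, Fintype.sum_bool]
  · norm_num [pdist, qdist, bern, Fintype.sum_bool]
end

section
/- Let p, q be probability mass functions on a finite product space X × Y where X = ∏ᵢ Xᵢ, p strictly positive, and suppose q is under s-SJS with index set I: q(x_{I^c} | x_I, y) = p(x_{I^c} | x_I, y). Let κ ⊇ I be a set of coordinates and let f : X → {1,…,L} be any function. Then for any value x_κ and any label value f̄, q(X_κ = x_κ, f(X) = f̄) = Σ_y w*(x_I, y) · p(X_κ = x_κ, f(X) = f̄, Y = y), where w*(x_I, y) = q(X_I = x_I, Y = y) / p(X_I = x_I, Y = y). -/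
open scoped Classical

/-- Marginal pmf of `(X_I, Y)`: sum of `p (x', y)` over `x'` agreeing with `x` on `I`. -/
noncomputable def margI {d : ℕ} {Xi : Fin d → Type*} [∀ i, Fintype (Xi i)] {Y : Type*}
    (p : (∀ i, Xi i) → Y → ℝ) (I : Finset (Fin d)) (x : ∀ i, Xi i) (y : Y) : ℝ :=
  ∑ x' : ∀ i, Xi i, if ∀ i ∈ I, x' i = x i then p x' y else 0

/-- Marginal pmf of the event `{X_κ = x_κ, f(X) = f̄, Y = y}`. -/
noncomputable def margEventY {d : ℕ} {Xi : Fin d → Type*} [∀ i, Fintype (Xi i)] {Y : Type*}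
    (p : (∀ i, Xi i) → Y → ℝ) (κ : Finset (Fin d)) (f : (∀ i, Xi i) → Y)
    (x : ∀ i, Xi i) (fbar : Y) (y : Y) : ℝ :=
  ∑ x' : ∀ i, Xi i, if (∀ i ∈ κ, x' i = x i) ∧ f x' = fbar then p x' y else 0

theorem stmt_9 {d : ℕ} {Xi : Fin d → Type*} [∀ i, Fintype (Xi i)]
    {Y : Type*} [Fintype Y]
    (p q : (∀ i, Xi i) → Y → ℝ)
    (hp : ∀ x y, 0 < p x y) (hq : ∀ x y, 0 ≤ q x y)
    (hpsum : ∑ x, ∑ y, p x y = 1) (hqsum : ∑ x, ∑ y, q x y = 1)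
    (s : ℕ) (I : Finset (Fin d)) (hIcard : I.card ≤ s)
    -- s-SJS with index set I: q(x_{I^c} | x_I, y) = p(x_{I^c} | x_I, y)
    (hsjs : ∀ x y, q x y / margI q I x y = p x y / margI p I x y)
    (κ : Finset (Fin d)) (hκ : I ⊆ κ)
    (f : (∀ i, Xi i) → Y) :
    ∀ (x : ∀ i, Xi i) (fbar : Y),
      (∑ y, margEventY q κ f x fbar y)
        = ∑ y, (margI q I x y / margI p I x y) * margEventY p κ f x fbar y := by
  -- if x' agrees with x on I, margI at x' equals margI at x
  have hcong : ∀ (r : (∀ i, Xi i) → Y → ℝ) (x x' : ∀ i, Xi i) (y : Y),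
      (∀ i ∈ I, x' i = x i) → margI r I x' y = margI r I x y := by
    intro r x x' y hag
    unfold margI
    refine Finset.sum_congr rfl fun z _ => ?_
    congr 1
    simp only [eq_iff_iff]
    constructor
    · intro h i hi; rw [h i hi, hag i hi]
    · intro h i hi; rw [h i hi, hag i hi]
  intro x fbar
  refine Finset.sum_congr rfl fun y _ => ?_
  unfold margEventY
  rw [Finset.mul_sum]
  refine Finset.sum_congr rfl fun x' _ => ?_
  by_cases h : (∀ i ∈ κ, x' i = x i) ∧ f x' = fbar
  · rw [if_pos h]
    have hag : ∀ i ∈ I, x' i = x i := fun i hi => h.1 i (hκ hi)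
    have hmq : margI q I x' y = margI q I x y := hcong q x x' y hag
    have hmp : margI p I x' y = margI p I x y := hcong p x x' y hag
    have hppos : 0 < margI p I x' y := by
      unfold margI
      refine Finset.sum_pos' (fun z _ => ?_) ⟨x', Finset.mem_univ x', ?_⟩
      · split <;> [exact (hp _ _).le; exact le_rfl]
      · simp [fun i (_ : i ∈ I) => rfl, (hp x' y)]
    have hqle : q x' y ≤ margI q I x' y := by
      unfold margI
      have := Finset.single_le_sum (s := Finset.univ)
        (f := fun z => if ∀ i ∈ I, z i = x' i then q z y else 0)
        (fun z _ => by split <;> [exact hq _ _; exact le_rfl]) (Finset.mem_univ x')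
      simpa using this
    rcases eq_or_ne (margI q I x' y) 0 with hz | hz
    · have hq0 : q x' y = 0 := le_antisymm (hz ▸ hqle) (hq x' y)
      rw [hq0, ← hmq, ← hmp, hz, zero_div, zero_mul]
    · have key := hsjs x' y
      have : q x' y = (p x' y / margI p I x' y) * margI q I x' y := by
        rw [← key]; field_simp
      rw [this, ← hmq, ← hmp]
      rw [if_pos h]
      field_simp
  · simp [h]
end

section
/- Let p, q be strictly positive pmfs on a finite space X × Y with X a d-fold product. Suppose (p, q) is under exact s-SJS with index set I, |I| = s, and suppose some weight function w_J depending only on coordinates J ⊆ {1,…,d}, |J| = s, and y satisfies q(x, y) = w_J(x_J, y)·p(x, y) = w_I(x_I, y)·p(x, y) where w_I(x_I,y) = q(x_I,y)/p(x_I,y). If additionally w_J and w_I are equal as functions, then w_I depends only on coordinates in I ∩ J; and if the shift is exactly s-sparse (no index set of size < s induces the shift), then J = I. -/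
open scoped Classical

/-- `(p, q)` is under SJS with index set `I`:
the conditional of `X_{I^c}` given `(X_I, Y)` is identical under `p` and `q`. -/
def SJScond {d : ℕ} {Xi : Fin d → Type*} [∀ i, Fintype (Xi i)] {Y : Type*}
    (p q : (∀ i, Xi i) → Y → ℝ) (I : Finset (Fin d)) : Prop :=
  ∀ x y, q x y / margI q I x y = p x y / margI p I x y

lemma margI_pos {d : ℕ} {Xi : Fin d → Type*} [∀ i, Fintype (Xi i)] {Y : Type*}
    {p : (∀ i, Xi i) → Y → ℝ} (hp : ∀ x y, 0 < p x y) (I : Finset (Fin d))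
    (x : ∀ i, Xi i) (y : Y) : 0 < margI p I x y := by
  have h1 : (if ∀ i ∈ I, x i = x i then p x y else 0) ≤ margI p I x y := by
    apply Finset.single_le_sum
      (f := fun x' : ∀ i, Xi i => if ∀ i ∈ I, x' i = x i then p x' y else 0)
    · intro z _
      split_ifs
      · exact (hp _ _).le
      · exact le_refl 0
    · exact Finset.mem_univ x
  rw [if_pos (fun i _ => rfl)] at h1
  exact lt_of_lt_of_le (hp x y) h1

lemma margI_congr {d : ℕ} {Xi : Fin d → Type*} [∀ i, Fintype (Xi i)] {Y : Type*}
    (p : (∀ i, Xi i) → Y → ℝ) (I : Finset (Fin d)) {x x' : ∀ i, Xi i} (y : Y)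
    (h : ∀ i ∈ I, x i = x' i) : margI p I x y = margI p I x' y := by
  unfold margI
  apply Finset.sum_congr rfl
  intro z _
  by_cases hc : ∀ i ∈ I, z i = x i
  · rw [if_pos hc, if_pos (fun i hi => (hc i hi).trans (h i hi))]
  · rw [if_neg hc, if_neg (fun hc' => hc (fun i hi => (hc' i hi).trans (h i hi).symm))]

theorem stmt_15 {d : ℕ} {Xi : Fin d → Type*} [∀ i, Fintype (Xi i)]
    {Y : Type*} [Fintype Y]
    (p q : (∀ i, Xi i) → Y → ℝ)
    (hp : ∀ x y, 0 < p x y) (hq : ∀ x y, 0 < q x y)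
    (hpsum : ∑ x, ∑ y, p x y = 1) (hqsum : ∑ x, ∑ y, q x y = 1)
    (s : ℕ) (I J : Finset (Fin d)) (hIcard : I.card = s) (hJcard : J.card = s)
    -- exact s-SJS with index set I
    (hsjs : SJScond p q I)
    (hexact : ∀ I' : Finset (Fin d), I'.card < s → ¬ SJScond p q I')
    (wJ : (∀ i : {i // i ∈ J}, Xi i.1) → Y → ℝ)
    -- q(x, y) = w_J(x_J, y) p(x, y) = w_I(x_I, y) p(x, y)
    (hwJ : ∀ x y, q x y = wJ (fun i => x i.1) y * p x y)
    (hwI : ∀ x y, q x y = (margI q I x y / margI p I x y) * p x y)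
    -- w_J and w_I are equal as functions of (x, y)
    (hWeq : ∀ x y, wJ (fun i => x i.1) y = margI q I x y / margI p I x y) :
    -- w_I depends on x only through the coordinates in I ∩ J, and J = I
    (∀ x x' y, (∀ i ∈ I ∩ J, x i = x' i) →
      margI q I x y / margI p I x y = margI q I x' y / margI p I x' y) ∧
    J = I := by
  -- Part 1: dependence only on I ∩ J
  have part1 : ∀ x x' y, (∀ i ∈ I ∩ J, x i = x' i) →
      margI q I x y / margI p I x y = margI q I x' y / margI p I x' y := by
    intro x x' y hIJ
    set z : ∀ i, Xi i := fun i => if i ∈ I then x i else x' i with hz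
    have hzI : ∀ i ∈ I, x i = z i := fun i hi => by simp [hz, hi]
    have hzJ : (fun i : {i // i ∈ J} => z i.1) = (fun i : {i // i ∈ J} => x' i.1) := by
      funext i
      by_cases hiI : i.1 ∈ I
      · simp only [hz, if_pos hiI]
        exact hIJ i.1 (Finset.mem_inter.mpr ⟨hiI, i.2⟩)
      · simp [hz, hiI]
    calc margI q I x y / margI p I x y
        = margI q I z y / margI p I z y := by
          rw [margI_congr q I y hzI, margI_congr p I y hzI]
      _ = wJ (fun i : {i // i ∈ J} => z i.1) y := (hWeq z y).symm
      _ = wJ (fun i : {i // i ∈ J} => x' i.1) y := by rw [hzJ]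
      _ = margI q I x' y / margI p I x' y := hWeq x' y
  refine ⟨part1, ?_⟩
  -- Part 2: J = I
  set K := I ∩ J with hK
  -- w is positive
  have hwpos : ∀ x y, 0 < margI q I x y / margI p I x y := fun x y =>
    div_pos (margI_pos hq I x y) (margI_pos hp I x y)
  -- SJS holds with K
  have hsjsK : SJScond p q K := by
    intro x y
    have hmargq : margI q K x y = (margI q I x y / margI p I x y) * margI p K x y := by
      unfold margI
      rw [Finset.mul_sum]
      apply Finset.sum_congr rfl
      intro z _
      by_cases hc : ∀ i ∈ K, z i = x i
      · rw [if_pos hc, if_pos hc, hwI z y]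
        congr 1
        exact part1 z x y hc
      · rw [if_neg hc, if_neg hc, mul_zero]
    rw [hmargq, hwI x y, mul_div_mul_left _ _ (ne_of_gt (hwpos x y))]
  -- K has card ≥ s
  have hKcard : ¬ K.card < s := fun h => hexact K h hsjsK
  push_neg at hKcard
  have hKI : K ⊆ I := Finset.inter_subset_left
  have hKJ : K ⊆ J := Finset.inter_subset_right
  have hKI' : K = I := Finset.eq_of_subset_of_card_le hKI (by rw [hIcard]; exact hKcard)
  have hKJ' : K = J := Finset.eq_of_subset_of_card_le hKJ (by rw [hJcard]; exact hKcard)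
  exact hKJ'.symm.trans hKI'
end

section
/- Let p, q be pmfs on X × Y with p > 0, and suppose (p,q) is under s-SJS with index set I. If additionally q(x_I, y)/p(x_I, y) = q(y)/p(y) for all x, y (the weight does not depend on x_I), then (p,q) is under label shift: q(x | y) = p(x | y) for all x, y. -/
open scoped Classical

theorem stmt_18 {d : ℕ} {Xi : Fin d → Type*} [∀ i, Fintype (Xi i)]
    {Y : Type*} [Fintype Y]
    (p q : (∀ i, Xi i) → Y → ℝ)
    (hp : ∀ x y, 0 < p x y) (hq : ∀ x y, 0 ≤ q x y)
    (hpsum : ∑ x, ∑ y, p x y = 1) (hqsum : ∑ x, ∑ y, q x y = 1)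
    (s : ℕ) (I : Finset (Fin d)) (hIcard : I.card ≤ s)
    -- s-SJS with index set I
    (hsjs : ∀ x y, q x y / margI q I x y = p x y / margI p I x y)
    -- the weight q(x_I, y)/p(x_I, y) does not depend on x_I
    (hconst : ∀ x y, margI q I x y / margI p I x y
        = (∑ x', q x' y) / (∑ x', p x' y)) :
    -- label shift: q(x | y) = p(x | y)
    ∀ x y, q x y / (∑ x', q x' y) = p x y / (∑ x', p x' y) := by
  intro x y
  have hmp : 0 < margI p I x y := by
    unfold margI
    refine Finset.sum_pos' (fun x' _ => ?_) ⟨x, Finset.mem_univ x, ?_⟩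
    · split_ifs
      · exact (hp _ _).le
      · exact le_rfl
    · rw [if_pos (fun i _ => rfl)]; exact hp x y
  have hmq0 : 0 ≤ margI q I x y := by
    unfold margI
    refine Finset.sum_nonneg (fun x' _ => ?_)
    split_ifs
    · exact hq _ _
    · exact le_rfl
  have hmq : 0 < margI q I x y := by
    rcases hmq0.lt_or_eq with h | h
    · exact h
    · exfalso
      have := hsjs x y
      rw [← h, div_zero] at this
      exact absurd this.symm (ne_of_gt (div_pos (hp x y) hmp))
  have hPy : 0 < ∑ x', p x' y :=
    Finset.sum_pos (fun x' _ => hp x' y) ⟨x, Finset.mem_univ x⟩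
  have hQy : (∑ x', q x' y) ≠ 0 := by
    intro h
    have := hconst x y
    rw [h, zero_div] at this
    exact absurd this (ne_of_gt (div_pos hmq hmp))
  have hqeq : q x y = p x y * ((∑ x', q x' y) / (∑ x', p x' y)) := by
    have h1 := hsjs x y
    have h2 := hconst x y
    rw [div_eq_div_iff hmq.ne' hmp.ne'] at h1
    rw [← h2]
    field_simp
    linarith [h1]
  rw [hqeq]
  field_simp
end
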